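/- Fix b > 0, let F : (0,∞) → (0,∞) be positive, and let δ > 0 satisfy δ ≤ min{ b / (F(1))^(3/2), 1/(2·√(2b)) }. If F(4^(−m−1)) ≤ b + δ·(F(4^(−m)))^(3/2) for all m ∈ ℕ, then sup over m ∈ ℕ of F(4^(−m)) is at most max{ 2b, (b/δ)^(2/3) }. -/

import Mathlib

/-- Rescaled iteration lemma with constant `b`. -/
theorem stmt_1 (b : ℝ) (hb : 0 < b) (F : ℝ → ℝ) (hF : ∀ r : ℝ, 0 < r → 0 < F r)
    (δ : ℝ) (hδ : 0 < δ)
    (hδle : δ ≤ min (b / (F 1) ^ ((3:ℝ)/2)) (1 / (2 * Real.sqrt (2 * b))))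
    (hrec : ∀ m : ℕ, F ((4:ℝ) ^ (-(m:ℝ) - 1)) ≤ b + δ * (F ((4:ℝ) ^ (-(m:ℝ)))) ^ ((3:ℝ)/2)) :
    ∀ m : ℕ, F ((4:ℝ) ^ (-(m:ℝ))) ≤ max (2 * b) ((b / δ) ^ ((2:ℝ)/3)) := by
  set M := max (2 * b) ((b / δ) ^ ((2:ℝ)/3)) with hMdef
  have hF1 : 0 < F 1 := hF 1 one_pos
  have hδ1 : δ ≤ b / (F 1) ^ ((3:ℝ)/2) := le_trans hδle (min_le_left _ _)
  have hδ2 : δ ≤ 1 / (2 * Real.sqrt (2 * b)) := le_trans hδle (min_le_right _ _)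
  have h2b : (0:ℝ) < 2 * b := by linarith
  have hsq : 0 < Real.sqrt (2 * b) := Real.sqrt_pos.mpr h2b
  have hbδ : 0 < b / δ := div_pos hb hδ
  have h2b32 : (2*b) ^ ((3:ℝ)/2) = (2*b) * Real.sqrt (2*b) := by
    rw [show (3:ℝ)/2 = 1 + 1/2 by norm_num, Real.rpow_add h2b, Real.rpow_one,
      Real.sqrt_eq_rpow]
  have hMpos : 0 < M := lt_max_of_lt_left h2b
  -- key inequality
  have hkey : b + δ * M ^ ((3:ℝ)/2) ≤ M := by
    rcases le_total ((b / δ) ^ ((2:ℝ)/3)) (2 * b) with h | h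
    · have hMeq : M = 2 * b := max_eq_left h
      have : δ * (2*b) ^ ((3:ℝ)/2) ≤ b := by
        rw [h2b32]
        have : δ * (2*b*Real.sqrt (2*b)) ≤ (1 / (2 * Real.sqrt (2*b))) * (2*b*Real.sqrt (2*b)) := by
          apply mul_le_mul_of_nonneg_right hδ2
          positivity
        calc δ * (2*b*Real.sqrt (2*b)) ≤ (1 / (2 * Real.sqrt (2*b))) * (2*b*Real.sqrt (2*b)) := this
          _ = b := by field_simp
      rw [hMeq]; linarith
    · have hMeq : M = (b / δ) ^ ((2:ℝ)/3) := max_eq_right h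
      have hpow : M ^ ((3:ℝ)/2) = b / δ := by
        rw [hMeq, ← Real.rpow_mul hbδ.le]
        norm_num
      rw [hpow]
      have : δ * (b / δ) = b := by field_simp
      rw [this]
      linarith [h]
  intro m
  induction m with
  | zero =>
    have h1 : F ((4:ℝ) ^ (-(0:ℕ):ℝ)) = F 1 := by norm_num
    rw [h1]
    have hstep : δ * (F 1) ^ ((3:ℝ)/2) ≤ b := by
      have := mul_le_mul_of_nonneg_right hδ1 (le_of_lt (Real.rpow_pos_of_pos hF1 ((3:ℝ)/2)))
      calc δ * (F 1) ^ ((3:ℝ)/2) ≤ (b / (F 1) ^ ((3:ℝ)/2)) * (F 1) ^ ((3:ℝ)/2) := this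
        _ = b := by field_simp
    have h2 : (F 1) ^ ((3:ℝ)/2) ≤ b / δ := by
      rw [le_div_iff₀ hδ]; linarith [hstep]
    have h3 : F 1 ≤ (b / δ) ^ ((2:ℝ)/3) := by
      have := Real.rpow_le_rpow (le_of_lt (Real.rpow_pos_of_pos hF1 ((3:ℝ)/2))) h2
        (by norm_num : (0:ℝ) ≤ 2/3)
      rwa [← Real.rpow_mul hF1.le, show ((3:ℝ)/2) * (2/3) = 1 by norm_num,
        Real.rpow_one] at this
    exact le_max_of_le_right h3
  | succ n ih =>
    have hexp : (-(↑(n+1):ℝ)) = -(n:ℝ) - 1 := by push_cast; ring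
    rw [hexp]
    have hFpos : 0 < F ((4:ℝ) ^ (-(n:ℝ))) := hF _ (Real.rpow_pos_of_pos (by norm_num) _)
    have h1 : (F ((4:ℝ) ^ (-(n:ℝ)))) ^ ((3:ℝ)/2) ≤ M ^ ((3:ℝ)/2) :=
      Real.rpow_le_rpow hFpos.le ih (by norm_num)
    calc F ((4:ℝ) ^ (-(n:ℝ) - 1)) ≤ b + δ * (F ((4:ℝ) ^ (-(n:ℝ)))) ^ ((3:ℝ)/2) := hrec n
      _ ≤ b + δ * M ^ ((3:ℝ)/2) := by nlinarith
      _ ≤ M := hkey
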